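/- For positive semidefinite operators A, B, C on a finite-dimensional Hilbert space with supp(A) ⊆ supp(B) and B ≤ C, the operator norm of C^{-1/2} A C^{-1/2} is at most the operator norm of B^{-1/2} A B^{-1/2}, where the inverses are generalized (Moore–Penrose) inverses. -/

import Mathlib

open scoped ComplexOrder Kronecker
open Matrix Classical

noncomputable def msqrt {n : Type*} [Fintype n] [DecidableEq n] (A : Matrix n n ℂ) :
    Matrix n n ℂ :=
  if h : A.PosSemidef then
    (h.1.eigenvectorUnitary : Matrix n n ℂ) *
      Matrix.diagonal (fun i => ((Real.sqrt (h.1.eigenvalues i) : ℝ) : ℂ)) *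
      (star h.1.eigenvectorUnitary : Matrix n n ℂ)
  else 0

noncomputable def traceNorm {n : Type*} [Fintype n] [DecidableEq n] (A : Matrix n n ℂ) : ℝ :=
  (msqrt (Aᴴ * A)).trace.re

noncomputable def fid {n : Type*} [Fintype n] [DecidableEq n] (ρ σ : Matrix n n ℂ) : ℝ :=
  traceNorm (msqrt ρ * msqrt σ) + Real.sqrt ((1 - ρ.trace.re) * (1 - σ.trace.re))

noncomputable def pdist {n : Type*} [Fintype n] [DecidableEq n] (ρ σ : Matrix n n ℂ) : ℝ :=
  Real.sqrt (1 - (fid ρ σ) ^ 2)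

/-- Loewner order: `A ≤ B` iff `B - A` is positive semidefinite. -/
def loewnerLE {n : Type*} [Fintype n] (A B : Matrix n n ℂ) : Prop := (B - A).PosSemidef

/-- Max-relative entropy `D_max(ρ‖σ) = min {λ : ρ ≤ 2^λ σ}`. -/
noncomputable def Dmax {n : Type*} [Fintype n] (ρ σ : Matrix n n ℂ) : ℝ :=
  sInf {l : ℝ | loewnerLE ρ (((2 : ℝ) ^ l) • σ)}

def Subnormalized {n : Type*} [Fintype n] (ρ : Matrix n n ℂ) : Prop :=
  ρ.PosSemidef ∧ 0 < ρ.trace.re ∧ ρ.trace.re ≤ 1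

def IsDensity {n : Type*} [Fintype n] (ρ : Matrix n n ℂ) : Prop :=
  ρ.PosSemidef ∧ ρ.trace = 1

/-- Operator norm (largest singular value). -/
noncomputable def opNorm {n : Type*} [Fintype n] [DecidableEq n] (A : Matrix n n ℂ) : ℝ :=
  ‖Matrix.toEuclideanCLM (𝕜 := ℂ) A‖

/-- Square root of the Moore–Penrose pseudoinverse of a Hermitian matrix. -/
noncomputable def pinvSqrt {n : Type*} [Fintype n] [DecidableEq n] (A : Matrix n n ℂ) :
    Matrix n n ℂ :=
  if h : A.IsHermitian then
    (h.eigenvectorUnitary : Matrix n n ℂ) *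
      Matrix.diagonal (fun i => ((Real.sqrt (h.eigenvalues i))⁻¹ : ℂ)) *
      (star h.eigenvectorUnitary : Matrix n n ℂ)
  else 0

/-- Support (range) of a matrix. -/
noncomputable def msupp {n : Type*} [Fintype n] (A : Matrix n n ℂ) : Submodule ℂ (n → ℂ) :=
  LinearMap.range A.mulVecLin

set_option synthInstance.maxHeartbeats 1000000
set_option maxHeartbeats 1000000
set_option linter.unusedSectionVars false

section Aux

variable {n : Type*} [Fintype n] [DecidableEq n]

lemma my_bridge (M : Matrix n n ℂ) :
    M.PosSemidef ↔ 0 ≤ toEuclideanCLM (𝕜 := ℂ) M := by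
  rw [ContinuousLinearMap.nonneg_iff_isPositive, ← ContinuousLinearMap.isPositive_toLinearMap_iff,
    coe_toEuclideanCLM_eq_toEuclideanLin, Matrix.isPositive_toEuclideanLin_iff]

lemma my_le_iff (M N : Matrix n n ℂ) : loewnerLE M N ↔
    toEuclideanCLM (𝕜 := ℂ) M ≤ toEuclideanCLM (𝕜 := ℂ) N := by
  unfold loewnerLE
  rw [my_bridge, map_sub, sub_nonneg]

lemma loewnerLE_trans {X Y Z : Matrix n n ℂ} (h1 : loewnerLE X Y) (h2 : loewnerLE Y Z) :
    loewnerLE X Z := by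
  have := h2.add h1
  unfold loewnerLE
  rwa [← sub_add_sub_cancel Z Y X]

lemma loewnerLE_conj {X Y : Matrix n n ℂ} (h : loewnerLE X Y) (S : Matrix n n ℂ) :
    loewnerLE (Sᴴ * X * S) (Sᴴ * Y * S) := by
  unfold loewnerLE
  rw [show Sᴴ * Y * S - Sᴴ * X * S = Sᴴ * (Y - X) * S by rw [mul_sub, sub_mul]]
  exact h.conjTranspose_mul_mul_same S

lemma psd_smul {X : Matrix n n ℂ} (h : X.PosSemidef) {r : ℝ} (hr : 0 ≤ r) :
    ((r : ℂ) • X).PosSemidef := by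
  exact h.smul (by rw [Complex.zero_le_real]; exact hr)

lemma loewnerLE_smul {X Y : Matrix n n ℂ} (h : loewnerLE X Y) {r : ℝ} (hr : 0 ≤ r) :
    loewnerLE ((r : ℂ) • X) ((r : ℂ) • Y) := by
  unfold loewnerLE
  rw [← smul_sub]
  exact psd_smul h hr

lemma opNorm_le_of_loewner {X : Matrix n n ℂ} (hX : X.PosSemidef) {r : ℝ} (hr : 0 ≤ r)
    (h : loewnerLE X ((r : ℂ) • 1)) : opNorm X ≤ r := by
  have h0 : 0 ≤ toEuclideanCLM (𝕜 := ℂ) X := (my_bridge X).mp hX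
  have h1 := (my_le_iff X ((r : ℂ) • 1)).mp h
  rw [_root_.map_smul, _root_.map_one] at h1
  have h2 : ‖toEuclideanCLM (𝕜 := ℂ) X‖ ≤
      ‖(r : ℂ) • (1 : EuclideanSpace ℂ n →L[ℂ] EuclideanSpace ℂ n)‖ :=
    CStarAlgebra.norm_le_norm_of_nonneg_of_le h0 h1
  calc opNorm X = ‖toEuclideanCLM (𝕜 := ℂ) X‖ := rfl
    _ ≤ ‖(r : ℂ) • (1 : EuclideanSpace ℂ n →L[ℂ] EuclideanSpace ℂ n)‖ := h2
    _ = ‖algebraMap ℂ (EuclideanSpace ℂ n →L[ℂ] EuclideanSpace ℂ n) (r : ℂ)‖ := by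
        rw [Algebra.algebraMap_eq_smul_one]
    _ = ‖(r : ℂ)‖ * ‖(1 : EuclideanSpace ℂ n →L[ℂ] EuclideanSpace ℂ n)‖ := norm_algebraMap _ _
    _ ≤ r * 1 := by
        apply mul_le_mul
        · simp [Complex.norm_real, abs_of_nonneg hr]
        · exact ContinuousLinearMap.norm_id_le
        · exact norm_nonneg _
        · exact hr
    _ = r := mul_one r

lemma loewner_le_opNorm_smul_one {X : Matrix n n ℂ} (hX : X.IsHermitian) :
    loewnerLE X (((opNorm X : ℝ) : ℂ) • 1) := by
  rw [my_le_iff, _root_.map_smul, _root_.map_one]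
  have hsa : _root_.IsSelfAdjoint (toEuclideanCLM (𝕜 := ℂ) X) := by
    rw [_root_.IsSelfAdjoint, ← map_star (toEuclideanCLM (𝕜 := ℂ) (n := n)) X,
      Matrix.star_eq_conjTranspose, hX.eq]
  have h := hsa.le_algebraMap_norm_self
  rw [Algebra.algebraMap_eq_smul_one] at h
  rw [show ((opNorm X : ℝ) : ℂ) = algebraMap ℝ ℂ (opNorm X) from rfl,
    algebraMap_smul ℂ (opNorm X) (1 : EuclideanSpace ℂ n →L[ℂ] EuclideanSpace ℂ n)]
  exact h

lemma conj_diag_mul {V : Matrix n n ℂ} (hV : star V * V = 1) (f g : n → ℂ) :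
    (V * diagonal f * star V) * (V * diagonal g * star V) =
      V * diagonal (fun i => f i * g i) * star V := by
  simp only [mul_assoc]
  rw [← mul_assoc (star V) V, hV, one_mul, ← mul_assoc (diagonal f), diagonal_mul_diagonal]

section Spectral

lemma gen_mul {V : Matrix n n ℂ} (hV : star V * V = 1) {f g h : n → ℂ}
    (hfg : ∀ i, f i * g i = h i) :
    (V * diagonal f * star V) * (V * diagonal g * star V) = V * diagonal h * star V := by
  have hfg' : (fun i => f i * g i) = h := funext hfg
  rw [conj_diag_mul hV, hfg']

variable {M : Matrix n n ℂ} (hM : M.PosSemidef)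

/-- Projection onto the support of a PSD matrix. -/
noncomputable def projOf (hM : M.PosSemidef) : Matrix n n ℂ :=
  (hM.1.eigenvectorUnitary : Matrix n n ℂ) *
    diagonal (fun i => if hM.1.eigenvalues i = 0 then (0 : ℂ) else 1) *
    (star hM.1.eigenvectorUnitary : Matrix n n ℂ)

/-- Square root of a PSD matrix. -/
noncomputable def psdSqrt (hM : M.PosSemidef) : Matrix n n ℂ :=
  (hM.1.eigenvectorUnitary : Matrix n n ℂ) *
    diagonal (fun i => ((Real.sqrt (hM.1.eigenvalues i) : ℝ) : ℂ)) *
    (star hM.1.eigenvectorUnitary : Matrix n n ℂ)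

lemma spec_eq : (hM.1.eigenvectorUnitary : Matrix n n ℂ) *
    diagonal (RCLike.ofReal ∘ hM.1.eigenvalues) *
    (star hM.1.eigenvectorUnitary : Matrix n n ℂ) = M := by
  conv_rhs => rw [hM.1.spectral_theorem, Unitary.conjStarAlgAut_apply]

lemma pinvSqrt_eq : pinvSqrt M =
    (hM.1.eigenvectorUnitary : Matrix n n ℂ) *
      diagonal (fun i => ((Real.sqrt (hM.1.eigenvalues i))⁻¹ : ℂ)) *
      (star hM.1.eigenvectorUnitary : Matrix n n ℂ) := by
  unfold pinvSqrt
  rw [dif_pos hM.1]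

lemma star_mul_self_V : star (hM.1.eigenvectorUnitary : Matrix n n ℂ) *
    (hM.1.eigenvectorUnitary : Matrix n n ℂ) = 1 :=
  Unitary.coe_star_mul_self hM.1.eigenvectorUnitary

lemma eigen_sqrt_ne_zero {i : n} (hdi : hM.1.eigenvalues i ≠ 0) :
    (Real.sqrt (hM.1.eigenvalues i) : ℂ) ≠ 0 := by
  have hpos : 0 < hM.1.eigenvalues i := lt_of_le_of_ne (hM.eigenvalues_nonneg i) (Ne.symm hdi)
  rw [Ne, Complex.ofReal_eq_zero, Real.sqrt_eq_zero (le_of_lt hpos)]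
  exact hdi

lemma eigen_ind_lemma (i : n) :
    (Real.sqrt (hM.1.eigenvalues i) : ℂ) * ((Real.sqrt (hM.1.eigenvalues i) : ℂ))⁻¹ =
      if hM.1.eigenvalues i = 0 then (0 : ℂ) else 1 := by
  by_cases hdi : hM.1.eigenvalues i = 0
  · simp [hdi]
  · rw [mul_inv_cancel₀ (eigen_sqrt_ne_zero hM hdi), if_neg hdi]

lemma psdSqrt_mul_self : psdSqrt hM * psdSqrt hM = M := by
  conv_rhs => rw [← spec_eq hM]
  exact gen_mul (star_mul_self_V hM) (fun i => by
    simp only [Function.comp_apply]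
    rw [← Complex.ofReal_mul, Real.mul_self_sqrt (hM.eigenvalues_nonneg i)]
    rfl)

lemma psdSqrt_hermitian : (psdSqrt hM)ᴴ = psdSqrt hM := by
  unfold psdSqrt
  rw [conjTranspose_mul, conjTranspose_mul, diagonal_conjTranspose]
  rw [← Matrix.star_eq_conjTranspose, ← Matrix.star_eq_conjTranspose, star_star]
  rw [mul_assoc]
  congr 2
  exact congrArg diagonal (funext fun i => by simp [Complex.star_def, Complex.conj_ofReal])

lemma sqrt_mul_pinvSqrt : psdSqrt hM * pinvSqrt M = projOf hM := by
  rw [pinvSqrt_eq hM]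
  exact gen_mul (star_mul_self_V hM) (fun i => eigen_ind_lemma hM i)

lemma pinvSqrt_mul_sqrt : pinvSqrt M * psdSqrt hM = projOf hM := by
  rw [pinvSqrt_eq hM]
  exact gen_mul (star_mul_self_V hM)
    (fun i => by rw [mul_comm]; exact eigen_ind_lemma hM i)

lemma proj_mul_base : projOf hM * M = M := by
  have e1 : projOf hM * M = projOf hM *
      ((hM.1.eigenvectorUnitary : Matrix n n ℂ) *
        diagonal (RCLike.ofReal ∘ hM.1.eigenvalues) *
        (star hM.1.eigenvectorUnitary : Matrix n n ℂ)) := by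
    rw [spec_eq hM]
  have s1 : projOf hM * ((hM.1.eigenvectorUnitary : Matrix n n ℂ) *
      diagonal (RCLike.ofReal ∘ hM.1.eigenvalues) *
      (star hM.1.eigenvectorUnitary : Matrix n n ℂ)) =
      (hM.1.eigenvectorUnitary : Matrix n n ℂ) *
        diagonal (RCLike.ofReal ∘ hM.1.eigenvalues) *
        (star hM.1.eigenvectorUnitary : Matrix n n ℂ) :=
    gen_mul (star_mul_self_V hM) (fun i => by
      by_cases hdi : hM.1.eigenvalues i = 0
      · simp only [Function.comp_apply, hdi, if_pos]
        simp [hdi]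
      · simp [hdi])
  rw [e1, s1, spec_eq hM]

lemma pinv_conj_base : pinvSqrt M * M * pinvSqrt M = projOf hM := by
  have e1 : pinvSqrt M * M * pinvSqrt M = pinvSqrt M *
      ((hM.1.eigenvectorUnitary : Matrix n n ℂ) *
        diagonal (RCLike.ofReal ∘ hM.1.eigenvalues) *
        (star hM.1.eigenvectorUnitary : Matrix n n ℂ)) * pinvSqrt M := by
    rw [spec_eq hM]
  rw [e1, pinvSqrt_eq hM]
  have s1 := gen_mul (V := (hM.1.eigenvectorUnitary : Matrix n n ℂ)) (star_mul_self_V hM)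
    (f := fun i => ((Real.sqrt (hM.1.eigenvalues i))⁻¹ : ℂ))
    (g := RCLike.ofReal ∘ hM.1.eigenvalues)
    (h := fun i => ((Real.sqrt (hM.1.eigenvalues i) : ℂ))⁻¹ * ((hM.1.eigenvalues i : ℝ) : ℂ))
    (fun i => rfl)
  rw [s1]
  exact gen_mul (star_mul_self_V hM) (fun i => by
    by_cases hdi : hM.1.eigenvalues i = 0
    · simp [hdi]
    · have hpos : 0 < hM.1.eigenvalues i :=
        lt_of_le_of_ne (hM.eigenvalues_nonneg i) (Ne.symm hdi)
      have hs := eigen_sqrt_ne_zero hM hdi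
      have hval : ((hM.1.eigenvalues i : ℝ) : ℂ) =
          (Real.sqrt (hM.1.eigenvalues i) : ℂ) * (Real.sqrt (hM.1.eigenvalues i) : ℂ) := by
        rw [← Complex.ofReal_mul, Real.mul_self_sqrt (le_of_lt hpos)]
      rw [hval, if_neg hdi]
      field_simp)

include hM in
lemma pinvSqrt_hermitian : (pinvSqrt M)ᴴ = pinvSqrt M := by
  rw [pinvSqrt_eq hM, conjTranspose_mul, conjTranspose_mul, diagonal_conjTranspose]
  rw [← Matrix.star_eq_conjTranspose, ← Matrix.star_eq_conjTranspose, star_star]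
  rw [mul_assoc]
  congr 2
  exact congrArg diagonal (funext fun i => by simp [Complex.star_def, Complex.conj_ofReal])

lemma projOf_hermitian : (projOf hM)ᴴ = projOf hM := by
  have hpj : projOf hM = (hM.1.eigenvectorUnitary : Matrix n n ℂ) *
      diagonal (fun i => if hM.1.eigenvalues i = 0 then (0 : ℂ) else 1) *
      (star hM.1.eigenvectorUnitary : Matrix n n ℂ) := rfl
  rw [hpj, conjTranspose_mul, conjTranspose_mul, diagonal_conjTranspose]
  rw [← Matrix.star_eq_conjTranspose, ← Matrix.star_eq_conjTranspose, star_star]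
  rw [mul_assoc]
  congr 2
  exact congrArg diagonal (funext fun i => by by_cases hdi : hM.1.eigenvalues i = 0 <;> simp [hdi])

lemma proj_le_one : loewnerLE (projOf hM) 1 := by
  unfold loewnerLE
  have hVV : (hM.1.eigenvectorUnitary : Matrix n n ℂ) *
      star (hM.1.eigenvectorUnitary : Matrix n n ℂ) = 1 :=
    Unitary.coe_mul_star_self hM.1.eigenvectorUnitary
  have hd : diagonal (fun i => (1 : ℂ) - (if hM.1.eigenvalues i = 0 then (0 : ℂ) else 1)) =
      (1 : Matrix n n ℂ) - diagonal (fun i => if hM.1.eigenvalues i = 0 then (0 : ℂ) else 1) := by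
    rw [← diagonal_one, diagonal_sub]
  have key : (1 : Matrix n n ℂ) - projOf hM =
      (hM.1.eigenvectorUnitary : Matrix n n ℂ) *
        diagonal (fun i => (1 : ℂ) - (if hM.1.eigenvalues i = 0 then (0 : ℂ) else 1)) *
        (star hM.1.eigenvectorUnitary : Matrix n n ℂ) := by
    rw [hd, mul_sub, mul_one, sub_mul, hVV]
    rfl
  rw [key, Matrix.star_eq_conjTranspose]
  apply Matrix.PosSemidef.mul_mul_conjTranspose_same
  apply Matrix.posSemidef_diagonal_iff.mpr
  intro i
  by_cases hdi : hM.1.eigenvalues i = 0 <;> simp [hdi]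

lemma proj_mul_of_supp {A B : Matrix n n ℂ} (hA : A.PosSemidef) (hB : B.PosSemidef)
    (hsupp : msupp A ≤ msupp B) : projOf hB * A = A ∧ A * projOf hB = A := by
  have hfix : ∀ v, projOf hB *ᵥ (A *ᵥ v) = A *ᵥ v := by
    intro v
    have hmem : A *ᵥ v ∈ msupp B := hsupp ⟨v, by simp [mulVecLin_apply]⟩
    obtain ⟨w, hw⟩ := hmem
    rw [← hw, mulVecLin_apply, mulVec_mulVec, proj_mul_base hB]
  have h1 : projOf hB * A = A := by
    ext i j
    have h := congrFun (hfix (Pi.single j 1)) i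
    rw [mulVec_mulVec] at h
    simpa [mulVec_single] using h
  refine ⟨h1, ?_⟩
  have h2 := congrArg conjTranspose h1
  rwa [conjTranspose_mul, hA.1.eq, projOf_hermitian hB] at h2

end Spectral

end Aux


theorem stmt0 {n : Type*} [Fintype n] [DecidableEq n] (A B C : Matrix n n ℂ)
    (hA : A.PosSemidef) (hB : B.PosSemidef) (hC : C.PosSemidef)
    (hsupp : msupp A ≤ msupp B) (hBC : loewnerLE B C) :
    opNorm (pinvSqrt C * A * pinvSqrt C) ≤ opNorm (pinvSqrt B * A * pinvSqrt B) := by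
  have hr : 0 ≤ opNorm (pinvSqrt B * A * pinvSqrt B) := norm_nonneg _
  have hPH : (pinvSqrt B)ᴴ = pinvSqrt B := pinvSqrt_hermitian hB
  have hQH : (pinvSqrt C)ᴴ = pinvSqrt C := pinvSqrt_hermitian hC
  have hMB : (pinvSqrt B * A * pinvSqrt B).PosSemidef := by
    have := hA.mul_mul_conjTranspose_same (pinvSqrt B)
    rwa [hPH] at this
  have h1 : loewnerLE (pinvSqrt B * A * pinvSqrt B)
      ((opNorm (pinvSqrt B * A * pinvSqrt B) : ℂ) • 1) := loewner_le_opNorm_smul_one hMB.1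
  have h2 := loewnerLE_conj h1 (psdSqrt hB)
  rw [psdSqrt_hermitian hB] at h2
  have hproj := proj_mul_of_supp hA hB hsupp
  have h3 : psdSqrt hB * (pinvSqrt B * A * pinvSqrt B) * psdSqrt hB = A := by
    calc psdSqrt hB * (pinvSqrt B * A * pinvSqrt B) * psdSqrt hB
        = (psdSqrt hB * pinvSqrt B) * A * (pinvSqrt B * psdSqrt hB) := by
          simp only [Matrix.mul_assoc]
      _ = projOf hB * A * projOf hB := by rw [sqrt_mul_pinvSqrt hB, pinvSqrt_mul_sqrt hB]
      _ = A := by rw [hproj.1, hproj.2]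
  have h4 : psdSqrt hB * ((opNorm (pinvSqrt B * A * pinvSqrt B) : ℂ) • 1) * psdSqrt hB
      = (opNorm (pinvSqrt B * A * pinvSqrt B) : ℂ) • B := by
    rw [mul_smul_comm, mul_one, smul_mul_assoc, psdSqrt_mul_self hB]
  rw [h3, h4] at h2
  have h5 : loewnerLE A ((opNorm (pinvSqrt B * A * pinvSqrt B) : ℂ) • C) :=
    loewnerLE_trans h2 (loewnerLE_smul hBC hr)
  have h6 := loewnerLE_conj h5 (pinvSqrt C)
  rw [hQH] at h6
  have h7 : pinvSqrt C * ((opNorm (pinvSqrt B * A * pinvSqrt B) : ℂ) • C) * pinvSqrt C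
      = (opNorm (pinvSqrt B * A * pinvSqrt B) : ℂ) • projOf hC := by
    rw [mul_smul_comm, smul_mul_assoc, pinv_conj_base hC]
  rw [h7] at h6
  have h8 := loewnerLE_smul (proj_le_one hC) hr
  have h9 : loewnerLE (pinvSqrt C * A * pinvSqrt C)
      ((opNorm (pinvSqrt B * A * pinvSqrt B) : ℂ) • 1) := loewnerLE_trans h6 h8
  have hQAQ : (pinvSqrt C * A * pinvSqrt C).PosSemidef := by
    have := hA.mul_mul_conjTranspose_same (pinvSqrt C)
    rwa [hQH] at this
  exact opNorm_le_of_loewner hQAQ hr h9
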